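/- In a strongly regular graph with parameters (75,32,10,16), every vertex not contained in a given 5-clique has exactly 2 neighbors in that 5-clique. -/
import Mathlib

open Finset

/-- The number of neighbors of `x` inside the vertex set `K`. -/
def nbrs {V : Type*} [DecidableEq V] (G : SimpleGraph V) [DecidableRel G.Adj]
    (K : Finset V) (x : V) : ℕ :=
  (K.filter (fun y => G.Adj x y)).card

/-- The number of vertices outside `K` with exactly `i` neighbors in `K`. -/
def bcount {V : Type*} [Fintype V] [DecidableEq V] (G : SimpleGraph V) [DecidableRel G.Adj]
    (K : Finset V) (i : ℕ) : ℕ :=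
  ((univ \ K).filter (fun x => nbrs G K x = i)).card


/-- In a (75,32,10,16) SRG, every vertex not in a given 5-clique has exactly
2 neighbors in that 5-clique. -/
theorem stmt3 {V : Type*} [Fintype V] [DecidableEq V]
    (G : SimpleGraph V) [DecidableRel G.Adj]
    (hG : G.IsSRGWith 75 32 10 16)
    (K : Finset V) (hK : G.IsNClique 5 K) :
    ∀ x ∉ K, nbrs G K x = 2 := by
  classical
  have hKcard : K.card = 5 := hK.card_eq
  have hclique := hK.isClique
  have hadjK : ∀ a ∈ K, ∀ b ∈ K, a ≠ b → G.Adj a b := fun a ha b hb hab =>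
    hclique ha hb hab
  set S : Finset V := univ \ K with hS
  have hScard : S.card = 70 := by
    rw [hS, card_sdiff_of_subset (subset_univ K), card_univ, hG.card, hKcard]
  -- split of filters
  have hsplit : ∀ p : V → Prop, ∀ _ : DecidablePred p,
      (S.filter p).card = (univ.filter p).card - (K.filter p).card := by
    intro p hp
    have h1 : S.filter p = univ.filter p \ K.filter p := by
      rw [hS]; ext a
      simp only [mem_filter, mem_sdiff, mem_univ, true_and]
      tauto
    rw [h1, card_sdiff_of_subset (filter_subset_filter _ (subset_univ K))]
  have L1 : ∀ y ∈ K, (S.filter (fun x => G.Adj x y)).card = 28 := by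
    intro y hy
    have hKf : K.filter (fun x => G.Adj x y) = K.erase y := by
      ext a
      simp only [mem_filter, mem_erase]
      constructor
      · rintro ⟨ha, hadj⟩; exact ⟨hadj.ne, ha⟩
      · rintro ⟨hne, ha⟩; exact ⟨ha, hadjK a ha y hy hne⟩
    have hUf : univ.filter (fun x => G.Adj x y) = G.neighborFinset y := by
      ext a; simp [G.adj_comm]
    rw [hsplit _ _, hUf, hKf, card_erase_of_mem hy, hKcard]
    have hdeg : (G.neighborFinset y).card = 32 := hG.regular y
    rw [hdeg]
  have L2 : ∀ y ∈ K, ∀ z ∈ K, y ≠ z →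
      (S.filter (fun x => G.Adj x y ∧ G.Adj x z)).card = 7 := by
    intro y hy z hz hyz
    have hadjyz : G.Adj y z := hadjK y hy z hz hyz
    have hU : univ.filter (fun x => G.Adj x y ∧ G.Adj x z) =
        (G.commonNeighbors y z).toFinset := by
      ext a
      simp [SimpleGraph.mem_commonNeighbors, G.adj_comm]
    have hUcard : (univ.filter (fun x => G.Adj x y ∧ G.Adj x z)).card = 10 := by
      rw [hU, Set.toFinset_card, hG.of_adj y z hadjyz]
    have hKf : K.filter (fun x => G.Adj x y ∧ G.Adj x z) = (K.erase y).erase z := by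
      ext a
      simp only [mem_filter, mem_erase]
      constructor
      · rintro ⟨ha, h1, h2⟩; exact ⟨h2.ne, h1.ne, ha⟩
      · rintro ⟨haz, hay, ha⟩; exact ⟨ha, hadjK a ha y hy hay, hadjK a ha z hz haz⟩
    have hKcard' : ((K.erase y).erase z).card = 3 := by
      rw [card_erase_of_mem (mem_erase.mpr ⟨hyz.symm, hz⟩), card_erase_of_mem hy, hKcard]
    rw [hsplit _ _, hUcard, hKf, hKcard']
  -- first and second moments
  have Sum1 : ∑ x ∈ S, nbrs G K x = 140 := by
    have : ∀ x, nbrs G K x = ∑ y ∈ K, if G.Adj x y then 1 else 0 := by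
      intro x; rw [nbrs, card_filter]
    simp_rw [this]
    rw [Finset.sum_comm]
    have : ∀ y ∈ K, (∑ x ∈ S, if G.Adj x y then 1 else 0) = 28 := by
      intro y hy
      rw [← card_filter]
      exact L1 y hy
    rw [Finset.sum_congr rfl this, Finset.sum_const, hKcard]; rfl
  have Sum2 : ∑ x ∈ S, (nbrs G K x) ^ 2 = 280 := by
    have h1 : ∀ x, (nbrs G K x) ^ 2 =
        ∑ y ∈ K, ∑ z ∈ K, if G.Adj x y ∧ G.Adj x z then 1 else 0 := by
      intro x
      rw [nbrs, sq, card_filter, Finset.sum_mul_sum]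
      apply Finset.sum_congr rfl; intro y _
      apply Finset.sum_congr rfl; intro z _
      by_cases h1 : G.Adj x y <;> by_cases h2 : G.Adj x z <;> simp [h1, h2]
    simp_rw [h1]
    rw [Finset.sum_comm]
    have h2 : ∀ y ∈ K, (∑ x ∈ S, ∑ z ∈ K, if G.Adj x y ∧ G.Adj x z then 1 else 0) = 56 := by
      intro y hy
      rw [Finset.sum_comm]
      have h3 : ∀ z ∈ K, (∑ x ∈ S, if G.Adj x y ∧ G.Adj x z then 1 else 0) =
          if z = y then 28 else 7 := by
        intro z hz
        rw [← card_filter]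
        by_cases hzy : z = y
        · subst hzy
          rw [if_pos rfl]
          have : (fun x => G.Adj x z ∧ G.Adj x z) = fun x => G.Adj x z := by
            ext a; simp
          rw [show (S.filter fun x => G.Adj x z ∧ G.Adj x z) = S.filter fun x => G.Adj x z by
            apply filter_congr; intro a _; simp]
          exact L1 z hz
        · rw [if_neg hzy]
          exact L2 y hy z hz (Ne.symm hzy)
      rw [Finset.sum_congr rfl h3, ← Finset.add_sum_erase K _ hy, if_pos rfl]
      have h4 : ∀ z ∈ K.erase y, (if z = y then 28 else 7) = 7 := by
        intro z hz; rw [if_neg (mem_erase.mp hz).1]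
      rw [Finset.sum_congr rfl h4, Finset.sum_const, card_erase_of_mem hy, hKcard]; rfl
    rw [Finset.sum_congr rfl h2, Finset.sum_const, hKcard]; rfl
  -- conclude
  intro x hx
  have hxS : x ∈ S := by rw [hS, mem_sdiff]; exact ⟨mem_univ x, hx⟩
  have key : ∑ x ∈ S, ((nbrs G K x : ℤ) - 2) ^ 2 = 0 := by
    have e : ∀ x ∈ S, ((nbrs G K x : ℤ) - 2) ^ 2 =
        ((nbrs G K x : ℤ)) ^ 2 - 4 * (nbrs G K x : ℤ) + 4 := by intro x _; ring
    rw [Finset.sum_congr rfl e, Finset.sum_add_distrib, Finset.sum_sub_distrib,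
      ← Finset.mul_sum, Finset.sum_const, hScard]
    have c1 : ∑ x ∈ S, ((nbrs G K x : ℤ)) ^ 2 = 280 := by
      exact_mod_cast Sum2
    have c2 : ∑ x ∈ S, (nbrs G K x : ℤ) = 140 := by
      exact_mod_cast Sum1
    rw [c1, c2]; norm_num
  have hnn : ∀ x ∈ S, (0:ℤ) ≤ ((nbrs G K x : ℤ) - 2) ^ 2 := fun x _ => sq_nonneg _
  have hz := (Finset.sum_eq_zero_iff_of_nonneg hnn).mp key x hxS
  have : (nbrs G K x : ℤ) = 2 := by nlinarith [sq_nonneg ((nbrs G K x : ℤ) - 2)]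
  exact_mod_cast this
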